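/- For every q ∈ 𝔯⁺ with |q| ≥ 0.54, the minimum of F_q(s) = (w(q)+s)ᵀ 𝓗(q) (w(q)+s) over the closed disk {s ∈ ℝ² : |s| ≤ ρ(q)} equals the minimum of f_q(α) over α ∈ [0, π/2], i.e. the minimum of F_q over the disk is attained on the boundary arc {ρ(q)·(cos(θ+α), sin(θ+α)) : α ∈ [0, π/2]}. -/

import Mathlib

open Matrix

noncomputable section

/-- Euclidean norm of a point of `ℝ²`. -/
def nrm (q : ℝ × ℝ) : ℝ := Real.sqrt (q.1 ^ 2 + q.2 ^ 2)

/-- Hill's region `𝔯`. -/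
def HillRegion : Set (ℝ × ℝ) :=
  {q | (3:ℝ) ^ ((4:ℝ)/3) / 2 < 1 / nrm q + (3/2) * q.1 ^ 2 ∧
       |q.1| < (3:ℝ) ^ (-(1:ℝ)/3) ∧ |q.2| < 2 * (3:ℝ) ^ (-(4:ℝ)/3)}

/-- The first quadrant part `𝔯⁺` of Hill's region. -/
def HillRegionPlus : Set (ℝ × ℝ) := {q ∈ HillRegion | 0 ≤ q.1 ∧ 0 ≤ q.2}

/-- The symmetric matrix `𝓗(q)`. -/
def Hmat (q : ℝ × ℝ) : Matrix (Fin 2) (Fin 2) ℝ :=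
  (1 / (nrm q) ^ 5) •
    !![-2 * (nrm q) ^ 5 + (nrm q) ^ 2 - 3 * q.1 ^ 2, -3 * q.1 * q.2;
       -3 * q.1 * q.2, (nrm q) ^ 5 + (nrm q) ^ 2 - 3 * q.2 ^ 2]

/-- The vector `w(q) = (q₂/|q|³, 3q₁ - q₁/|q|³)`. -/
def w (q : ℝ × ℝ) : Fin 2 → ℝ := ![q.2 / (nrm q) ^ 3, 3 * q.1 - q.1 / (nrm q) ^ 3]

/-- The radius `ρ(q) = √(3q₁² + 2/|q| - 3^{4/3})`. -/
def ρ (q : ℝ × ℝ) : ℝ := Real.sqrt (3 * q.1 ^ 2 + 2 / nrm q - (3:ℝ) ^ ((4:ℝ)/3))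

/-- The function `f_q(α) = (w(q)+s)ᵀ 𝓗(q) (w(q)+s)` where
`s = ρ(q)·(cos(θ+α), sin(θ+α))` and `θ` is the polar angle of `q`. -/
def fq (q : ℝ × ℝ) (θ : ℝ) (α : ℝ) : ℝ :=
  (w q + ρ q • ![Real.cos (θ + α), Real.sin (θ + α)]) ⬝ᵥ
    (Hmat q).mulVec (w q + ρ q • ![Real.cos (θ + α), Real.sin (θ + α)])

/-- The quadratic function `F_q(s) = (w(q)+s)ᵀ 𝓗(q) (w(q)+s)` on `s ∈ ℝ²`. -/
def Fq (q : ℝ × ℝ) (s : ℝ × ℝ) : ℝ :=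
  (w q + ![s.1, s.2]) ⬝ᵥ (Hmat q).mulVec (w q + ![s.1, s.2])

/- ------------- auxiliary lemmas ------------- -/

theorem sqrt_step {a b : ℝ} (hb : 0 ≤ b) (h : a^2 ≤ b^2) (ha : 0 ≤ a) : a ≤ b := by
  nlinarith

set_option maxHeartbeats 1000000 in
theorem core_hard (r δ ρ u v : ℝ)
    (hδ0 : 0 ≤ δ) (hδhi : δ ≤ 0.1534) (hr54 : 0.54 ≤ r)
    (hu : 0 ≤ u) (hv : 0 ≤ v) (hρ0 : 0 ≤ ρ) (hur : u ≤ r) (hrhi : r ≤ 0.6934)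
    (hr2 : r^2 = u^2 + v^2)
    (hrδlo : 0.6933 - δ ≤ r) (hrδhi : r ≤ 0.6934 - δ)
    (h13 : 4.3257*δ - 6.2406*δ^2 ≤ 1 - 3*r^3)
    (hrv2 : 3*r*v^2 ≤ 6.2406*δ^2) (hrρ2 : r*ρ^2 ≤ 6.2406*δ^2) :
    9*u^2*v^2*r^2 + 3*u*v*r^3*ρ + (1 - 2*r^3 + 3*r*u^2)*(3*r*u^2 - 1 + ρ*r^2) ≤ 0 := by
  have hrpos : (0:ℝ) < r := by linarith
  have hA : 1 - 2*r^3 + 3*r*u^2 = 1 + r^3 - 3*r*v^2 := by linear_combination -3*r*hr2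
  have hid : (1 - 2*r^3 + 3*r*u^2)*(3*r*u^2 - 1 + ρ*r^2)
      = -((1 + r^3 - 3*r*v^2) * ((1 - 3*r*u^2) - ρ*r^2)) := by
    linear_combination (3*r*u^2 - 1 + ρ*r^2)*hA
  have hPv : (1 - 3*r*u^2) = 1 - 3*r^3 + 3*r*v^2 := by linear_combination 3*r*hr2
  have hE1 : 9*u^2*v^2*r^2 ≤ 9*r^4*v^2 := by
    nlinarith [mul_nonneg (mul_nonneg (sq_nonneg v) (sq_nonneg r))
      (mul_nonneg (sub_nonneg.2 hur) (by linarith : 0 ≤ u + r))]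
  have hE2 : 3*u*v*r^3*ρ ≤ 3*r^4*v*ρ := by
    nlinarith [mul_nonneg (mul_nonneg (mul_nonneg hv hρ0) (sub_nonneg.2 hur)) (pow_nonneg hrpos.le 3)]
  have hrv0 : (0:ℝ) ≤ r*v^2 := mul_nonneg hrpos.le (sq_nonneg v)
  rw [hid]
  rcases le_or_gt δ 0.11 with hcase | hcase
  · have hrlo : 0.5833 ≤ r := by linarith
    have hδsq : δ^2 ≤ 0.11*δ := by
      have := mul_le_mul_of_nonneg_left hcase hδ0
      nlinarith [sq_nonneg δ]
    have hr2hi : r^2 ≤ 0.48081 := by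
      have := mul_le_mul hrhi hrhi hrpos.le (by norm_num : (0:ℝ) ≤ 0.6934)
      linarith
    have hρδ : ρ ≤ 3.28*δ := by
      refine sqrt_step (by linarith) ?_ hρ0
      linarith [mul_nonneg (by linarith : (0:ℝ) ≤ r - 0.5833) (sq_nonneg ρ)]
    have hvδ : v ≤ 1.89*δ := by
      refine sqrt_step (by linarith) ?_ hv
      linarith [mul_nonneg (by linarith : (0:ℝ) ≤ r - 0.5833) (sq_nonneg v)]
    have hρr2 : ρ*r^2 ≤ 1.5771*δ := by
      have := mul_le_mul hρδ hr2hi (sq_nonneg r) (by linarith : (0:ℝ) ≤ 3.28*δ)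
      linarith
    have hPm3 : (1 - 3*r*u^2) - ρ*r^2 ≥ 1.3757*δ := by rw [hPv]; linarith
    have hr3lo : (0.5833:ℝ)^3 ≤ r^3 := pow_le_pow_left₀ (by norm_num) hrlo 3
    have hApos : 1 + r^3 - 3*r*v^2 ≥ 1.12 := by linarith
    have hprod : 1.12*(1.3757*δ) ≤ (1 + r^3 - 3*r*v^2) * ((1 - 3*r*u^2) - ρ*r^2) :=
      mul_le_mul hApos hPm3 (by linarith) (by linarith)
    have hr4 : r^4 ≤ 0.23119 := by
      have := mul_le_mul hr2hi hr2hi (sq_nonneg r) (by norm_num : (0:ℝ) ≤ 0.48081)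
      linarith
    have hv2 : v^2 ≤ 3.5665*δ^2 := by
      linarith [mul_nonneg (by linarith : (0:ℝ) ≤ r - 0.5833) (sq_nonneg v)]
    have hvρ : v*ρ ≤ 6.1992*δ^2 := by
      have := mul_le_mul hvδ hρδ hρ0 (by linarith : (0:ℝ) ≤ 1.89*δ)
      linarith [sq_nonneg δ]
    have hRHS : 9*r^4*v^2 + 3*r^4*v*ρ ≤ 11.721*δ^2 := by
      have t1 := mul_le_mul hr4 hv2 (sq_nonneg v) (by norm_num : (0:ℝ) ≤ 0.23119)
      have t2 := mul_le_mul hr4 hvρ (mul_nonneg hv hρ0) (by norm_num : (0:ℝ) ≤ 0.23119)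
      linarith [sq_nonneg δ]
    linarith
  · have hrhi2 : r ≤ 0.5834 := by linarith
    have hδsq : δ^2 ≤ 0.1534*δ := by
      have := mul_le_mul_of_nonneg_left hδhi hδ0
      nlinarith [sq_nonneg δ]
    have hr2hi : r^2 ≤ 0.34036 := by
      have := mul_le_mul hrhi2 hrhi2 hrpos.le (by norm_num : (0:ℝ) ≤ 0.5834)
      linarith
    have hρδ : ρ ≤ 3.41*δ := by
      refine sqrt_step (by linarith) ?_ hρ0
      linarith [mul_nonneg (by linarith : (0:ℝ) ≤ r - 0.54) (sq_nonneg ρ)]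
    have hvδ : v ≤ 1.97*δ := by
      refine sqrt_step (by linarith) ?_ hv
      linarith [mul_nonneg (by linarith : (0:ℝ) ≤ r - 0.54) (sq_nonneg v)]
    have hρr2 : ρ*r^2 ≤ 1.1607*δ := by
      have := mul_le_mul hρδ hr2hi (sq_nonneg r) (by linarith : (0:ℝ) ≤ 3.41*δ)
      linarith
    have hPm3 : (1 - 3*r*u^2) - ρ*r^2 ≥ 1.2505*δ := by rw [hPv]; linarith
    have hr3lo : (0.54:ℝ)^3 ≤ r^3 := pow_le_pow_left₀ (by norm_num) hr54 3
    have hApos : 1 + r^3 - 3*r*v^2 ≥ 1.0105 := by linarith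
    have hprod : 1.0105*(1.2505*δ) ≤ (1 + r^3 - 3*r*v^2) * ((1 - 3*r*u^2) - ρ*r^2) :=
      mul_le_mul hApos hPm3 (by linarith) (by linarith)
    have hr4 : r^4 ≤ 0.11586 := by
      have := mul_le_mul hr2hi hr2hi (sq_nonneg r) (by norm_num : (0:ℝ) ≤ 0.34036)
      linarith
    have hv2 : v^2 ≤ 3.8523*δ^2 := by
      linarith [mul_nonneg (by linarith : (0:ℝ) ≤ r - 0.54) (sq_nonneg v)]
    have hvρ : v*ρ ≤ 6.7178*δ^2 := by
      have := mul_le_mul hvδ hρδ hρ0 (by linarith : (0:ℝ) ≤ 1.97*δ)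
      linarith [sq_nonneg δ]
    have hRHS : 9*r^4*v^2 + 3*r^4*v*ρ ≤ 6.3521*δ^2 := by
      have t1 := mul_le_mul hr4 hv2 (sq_nonneg v) (by norm_num : (0:ℝ) ≤ 0.11586)
      have t2 := mul_le_mul hr4 hvρ (mul_nonneg hv hρ0) (by norm_num : (0:ℝ) ≤ 0.11586)
      linarith [sq_nonneg δ]
    linarith

set_option maxHeartbeats 1000000 in
theorem core_numeric (β u v r ρ : ℝ) (hβ : 3*β^3 = 1)
    (hu : 0 ≤ u) (hv : 0 ≤ v) (huβ : u ≤ β) (hr54 : 0.54 ≤ r)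
    (hr2 : r^2 = u^2 + v^2) (hρ0 : 0 ≤ ρ)
    (hH : β*r*ρ^2 = 3*β*u^2*r + 2*β - 3*r) :
    ((v^2 - 2*u^2)*r ≤ 2) ∧ (0 ≤ 1 - 2*r^3 + 3*r*u^2) ∧ (r^3 + ρ*r^2 ≤ 3) ∧
    (9*u^2*v^2*r^2 + 3*u*v*r^3*ρ + (1 - 2*r^3 + 3*r*u^2)*(3*r*u^2 - 1 + ρ*r^2) ≤ 0) := by
  have hβpos : 0 < β := by nlinarith [sq_nonneg β, sq_nonneg (β-1), sq_nonneg (β+1)]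
  have hβlo : 0.6933 ≤ β := by nlinarith [sq_nonneg (β - 0.6933), sq_nonneg (β + 2*0.6933)]
  have hβhi : β ≤ 0.6934 := by nlinarith [sq_nonneg (β - 0.6934), sq_nonneg (β + 2*0.6934)]
  have hrpos : 0 < r := by linarith
  have hrβ : r ≤ β := by
    nlinarith [mul_nonneg (mul_nonneg hβpos.le hrpos.le) (sq_nonneg ρ),
      mul_nonneg (mul_nonneg (mul_nonneg (by norm_num : (0:ℝ) ≤ 3) hβpos.le) hrpos.le)
        (mul_nonneg (sub_nonneg.2 huβ) (by linarith : 0 ≤ β + u)), sq_nonneg β]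
  set δ := β - r with hδ
  have hδ0 : 0 ≤ δ := by simp only [hδ]; linarith
  have hδhi : δ ≤ 0.1534 := by simp only [hδ]; linarith
  have hur : u ≤ r := by nlinarith [sq_nonneg v]
  have hrhi : r ≤ 0.6934 := by linarith
  have hkeyβ : β*(r*ρ^2 + 3*r*v^2) = β*(3*δ^2*(2*β+r)) := by
    simp only [hδ]
    linear_combination hH - 3*β*r*hr2 + (3*r - 2*β)*hβ
  have hkey : r*ρ^2 + 3*r*v^2 = 3*δ^2*(2*β+r) := mul_left_cancel₀ (ne_of_gt hβpos) hkeyβ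
  have hrρ0 : 0 ≤ r*ρ^2 := mul_nonneg hrpos.le (sq_nonneg ρ)
  have hrv0 : 0 ≤ r*v^2 := mul_nonneg hrpos.le (sq_nonneg v)
  have hδδ : 0 ≤ δ^2 := sq_nonneg δ
  have hβδ : 0 ≤ (0.6934 - β)*δ^2 := mul_nonneg (by linarith) hδδ
  have hrv2 : 3*r*v^2 ≤ 6.2406*δ^2 := by nlinarith [hkey]
  have hrρ2 : r*ρ^2 ≤ 6.2406*δ^2 := by nlinarith [hkey]
  have hid3 : 1 - 3*r^3 = 9*β^2*δ - 9*β*δ^2 + 3*δ^3 := by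
    simp only [hδ]; linear_combination -hβ
  have h13 : 4.3257*δ - 6.2406*δ^2 ≤ 1 - 3*r^3 := by
    rw [hid3]
    have t1 : 0 ≤ ((β - 0.6933)*(β + 0.6933))*δ := by
      apply mul_nonneg (mul_nonneg (by linarith) (by linarith)) hδ0
    have t2 : 0 ≤ δ^2*δ := mul_nonneg hδδ hδ0
    nlinarith [t1, t2, hβδ]
  have hrδlo : 0.6933 - δ ≤ r := by simp only [hδ]; linarith
  have hrδhi : r ≤ 0.6934 - δ := by simp only [hδ]; linarith
  have hρδ : ρ ≤ 3.41*δ := by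
    refine sqrt_step (by linarith) ?_ hρ0
    linarith [mul_nonneg (by linarith : (0:ℝ) ≤ r - 0.54) (sq_nonneg ρ)]
  have hr3hi : r^3 ≤ 0.6934^3 := pow_le_pow_left₀ hrpos.le hrhi 3
  refine ⟨?_, ?_, ?_, ?_⟩
  · nlinarith [mul_nonneg (mul_nonneg (by norm_num : (0:ℝ) ≤ 3) hrpos.le) (sq_nonneg u)]
  · nlinarith [mul_nonneg (mul_nonneg (by norm_num : (0:ℝ) ≤ 3) hrpos.le) (sq_nonneg u)]
  · have hρhi : ρ ≤ 0.524 := by linarith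
    have hr2hi : r^2 ≤ 0.48081 := by nlinarith
    have : ρ*r^2 ≤ 0.524*0.48081 := by
      have := mul_le_mul hρhi hr2hi (sq_nonneg r) (by norm_num : (0:ℝ) ≤ 0.524)
      linarith
    linarith
  · exact core_hard r δ ρ u v hδ0 hδhi hr54 hu hv hρ0 hur hrhi hr2 hrδlo hrδhi h13 hrv2 hrρ2

set_option maxHeartbeats 1000000 in
/-- Abstract quarter-disk reduction for a 2D quadratic form. -/
theorem quarter_reduce (A11 A12 A22 W1 W2 R : ℝ) (hR : 0 ≤ R)
    (h11 : A11 ≤ 0) (h12 : 0 ≤ A12) (h22 : 0 ≤ A22)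
    (h5 : A11*W1 + A12*(W2+R) ≤ 0) (h7 : A12*(W1+R) + A22*(W2+R) ≤ 0)
    (x y : ℝ) (hxy : x^2 + y^2 ≤ R^2) :
    ∃ X Y : ℝ, 0 ≤ X ∧ 0 ≤ Y ∧ X^2 + Y^2 = R^2 ∧
      A11*(W1+X)^2 + 2*A12*(W1+X)*(W2+Y) + A22*(W2+Y)^2 ≤
      A11*(W1+x)^2 + 2*A12*(W1+x)*(W2+y) + A22*(W2+y)^2 := by
  set g : ℝ → ℝ → ℝ := fun a b => A11*(W1+a)^2 + 2*A12*(W1+a)*(W2+b) + A22*(W2+b)^2 with hg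
  have hxR : |x| ≤ R := by
    rw [abs_le]; constructor <;> nlinarith [sq_nonneg y, sq_nonneg (x-R), sq_nonneg (x+R)]
  have hyR : |y| ≤ R := by
    rw [abs_le]; constructor <;> nlinarith [sq_nonneg x, sq_nonneg (y-R), sq_nonneg (y+R)]
  have step1 : g x |y| ≤ g x y := by
    rcases abs_choice y with h | h
    · rw [h]
    · rw [h]
      have hkey : A12*(W1+x) + A22*W2 ≤ 0 := by
        have h1 : A12*(W1+x) ≤ A12*(W1+R) := by nlinarith [abs_le.1 hxR]
        nlinarith
      have hid : g x (-y) - g x y = (-4*y) * (A12*(W1+x) + A22*W2) := by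
        simp only [hg]; ring
      have hy0 : y ≤ 0 := by
        rcases le_or_gt y 0 with h' | h'
        · exact h'
        · exfalso; have := abs_of_pos h'; rw [this] at h; linarith
      nlinarith [mul_nonneg (by linarith : (0:ℝ) ≤ -4*y) (by linarith : (0:ℝ) ≤ -(A12*(W1+x) + A22*W2))]
  have step2 : g |x| |y| ≤ g x |y| := by
    rcases abs_choice x with h | h
    · rw [h]
    · rw [h]
      have hkey : A11*W1 + A12*(W2+|y|) ≤ 0 := by
        have : A12*(W2+|y|) ≤ A12*(W2+R) := by nlinarith [abs_le.1 hyR]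
        linarith
      have hid : g (-x) |y| - g x |y| = (-4*x) * (A11*W1 + A12*(W2+|y|)) := by
        simp only [hg]; ring
      have hx0 : x ≤ 0 := by
        rcases le_or_gt x 0 with h' | h'
        · exact h'
        · exfalso; have := abs_of_pos h'; rw [this] at h; linarith
      nlinarith [mul_nonneg (by linarith : (0:ℝ) ≤ -4*x) (by linarith : (0:ℝ) ≤ -(A11*W1 + A12*(W2+|y|)))]
  have brkt : ∀ a b : ℝ, 0 ≤ a → 0 ≤ b → a ≤ R → b ≤ R →
      (A11*(W1+a) + A12*(W2+b))*a + (A12*(W1+a) + A22*(W2+b))*b ≤ 0 := by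
    intro a b ha hb haR hbR
    have h1 : A11*(W1+a) + A12*(W2+b) ≤ 0 := by nlinarith
    have h2 : A12*(W1+a) + A22*(W2+b) ≤ 0 := by nlinarith
    have t1 : (A11*(W1+a) + A12*(W2+b))*a ≤ 0 := mul_nonpos_iff.2 (Or.inr ⟨h1, ha⟩)
    have t2 : (A12*(W1+a) + A22*(W2+b))*b ≤ 0 := mul_nonpos_iff.2 (Or.inr ⟨h2, hb⟩)
    linarith
  set X0 := |x| with hX0
  set Y0 := |y| with hY0
  have hX00 : 0 ≤ X0 := abs_nonneg x
  have hY00 : 0 ≤ Y0 := abs_nonneg y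
  have hXY0 : X0^2 + Y0^2 ≤ R^2 := by rw [hX0, hY0, sq_abs, sq_abs]; exact hxy
  have hX0R : X0 ≤ R := by rwa [hX0]
  have hY0R : Y0 ≤ R := by rwa [hY0]
  by_cases hz : X0^2 + Y0^2 = 0
  · have hx0 : X0 = 0 := by nlinarith [sq_nonneg X0, sq_nonneg Y0]
    have hy0 : Y0 = 0 := by nlinarith [sq_nonneg X0, sq_nonneg Y0]
    refine ⟨R, 0, hR, le_refl 0, by ring, ?_⟩
    have hbr := brkt R 0 hR (le_refl 0) (le_refl R) hR
    have hbr0 : A11*W1 + A12*W2 ≤ 0 := by nlinarith [mul_nonneg h12 hR]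
    have h0 : g R 0 ≤ g X0 Y0 := by
      have hid : g R 0 - g X0 Y0 = R * (2*(A11*W1 + A12*W2) + A11*R) := by
        simp only [hg, hx0, hy0]; ring
      nlinarith [mul_nonneg hR (by nlinarith [mul_nonpos_iff.2 (Or.inr ⟨h11, hR⟩)] :
        (0:ℝ) ≤ -(2*(A11*W1 + A12*W2) + A11*R))]
    calc g R 0 ≤ g X0 Y0 := h0
      _ ≤ g x |y| := step2
      _ ≤ g x y := step1
  · have hn : 0 < X0^2 + Y0^2 := lt_of_le_of_ne (by positivity) (Ne.symm hz)
    set n := Real.sqrt (X0^2 + Y0^2) with hn'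
    have hnpos : 0 < n := Real.sqrt_pos.2 hn
    have hnsq : n^2 = X0^2 + Y0^2 := Real.sq_sqrt hn.le
    have hnR : n ≤ R := by
      have := Real.sqrt_le_sqrt hXY0
      rwa [Real.sqrt_sq hR] at this
    have hRpos : 0 < R := by nlinarith
    set l := R / n with hl
    have hlpos : 0 < l := div_pos hRpos hnpos
    have hl1 : 1 ≤ l := (one_le_div hnpos).2 hnR
    have hln : l * n = R := by rw [hl]; field_simp
    have hcirc : (l*X0)^2 + (l*Y0)^2 = R^2 := by
      calc (l*X0)^2 + (l*Y0)^2 = l^2*(X0^2+Y0^2) := by ring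
        _ = l^2*n^2 := by rw [hnsq]
        _ = (l*n)^2 := by ring
        _ = R^2 := by rw [hln]
    refine ⟨l * X0, l * Y0, by positivity, by positivity, hcirc, ?_⟩
    have hXl : l * X0 ≤ R := by
      nlinarith [sq_nonneg (l*Y0), mul_nonneg (mul_nonneg hlpos.le hX00) hR]
    have hYl : l * Y0 ≤ R := by
      nlinarith [sq_nonneg (l*X0), mul_nonneg (mul_nonneg hlpos.le hY00) hR]
    have hb1 := brkt X0 Y0 hX00 hY00 hX0R hY0R
    have hb2 := brkt (l*X0) (l*Y0) (by positivity) (by positivity) hXl hYl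
    set S2 := (A11*(W1+l*X0) + A12*(W2+l*Y0))*X0 + (A12*(W1+l*X0) + A22*(W2+l*Y0))*Y0 with hS2
    have hb2' : S2 ≤ 0 := by
      have expand : (A11*(W1+l*X0) + A12*(W2+l*Y0))*(l*X0) + (A12*(W1+l*X0) + A22*(W2+l*Y0))*(l*Y0)
          = l * S2 := by rw [hS2]; ring
      rw [expand] at hb2
      by_contra hcon
      push_neg at hcon
      nlinarith [mul_pos hlpos hcon]
    have key : g (l*X0) (l*Y0) - g X0 Y0 =
        (l-1) * (S2 + ((A11*(W1+X0) + A12*(W2+Y0))*X0 + (A12*(W1+X0) + A22*(W2+Y0))*Y0)) := by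
      simp only [hg, hS2]; ring
    have hfinal : g (l*X0) (l*Y0) ≤ g X0 Y0 := by
      nlinarith [mul_nonneg (by linarith : (0:ℝ) ≤ l - 1)
        (by linarith : (0:ℝ) ≤ -(S2 + ((A11*(W1+X0) + A12*(W2+Y0))*X0 + (A12*(W1+X0) + A22*(W2+Y0))*Y0)))]
    calc g (l*X0) (l*Y0) ≤ g X0 Y0 := hfinal
      _ ≤ g x |y| := step2
      _ ≤ g x y := step1

theorem Fq_expand (q : ℝ × ℝ) (p : ℝ × ℝ) :
    Fq q p = ((-2*(nrm q)^5+(nrm q)^2-3*q.1^2)/(nrm q)^5) * (q.2/(nrm q)^3 + p.1)^2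
      + 2*((-3*q.1*q.2)/(nrm q)^5) * (q.2/(nrm q)^3 + p.1) * ((3*q.1 - q.1/(nrm q)^3) + p.2)
      + ((nrm q)^5+(nrm q)^2-3*q.2^2)/(nrm q)^5 * ((3*q.1 - q.1/(nrm q)^3) + p.2)^2 := by
  simp [Fq, Hmat, w, Matrix.mulVec, dotProduct, Fin.sum_univ_two]
  ring

theorem fq_eq_Fq (q : ℝ × ℝ) (θ α : ℝ) :
    fq q θ α = Fq q (ρ q * Real.cos (θ + α), ρ q * Real.sin (θ + α)) := by
  simp [fq, Fq, Matrix.smul_cons, smul_eq_mul, Matrix.smul_empty]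

theorem bridge_poly (r c s x y : ℝ) (hcs : c^2 + s^2 = 1) :
    (-2*r^5+r^2-3*(r*c)^2)*(s + r^2*(c*x-s*y))^2
      + 2*(-3*(r*c)*(r*s))*(s + r^2*(c*x-s*y))*((3*r^3*c - c) + r^2*(s*x+c*y))
      + (r^5+r^2-3*(r*s)^2)*((3*r^3*c - c) + r^2*(s*x+c*y))^2
    = (((r*s)^2-2*(r*c)^2)*r-2)*(3*(r*c)*(r*s)+r*x)^2*r^4
      + 2*(3*(r*c)*(r*s))*(3*(r*c)*(r*s)+r*x)*((3*(r*c)^2*r-1)+r^2*y)*r^4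
      + (1-2*r^3+3*r*(r*c)^2)*((3*(r*c)^2*r-1)+r^2*y)^2*r^2 := by
  linear_combination ((1)*r^2 + (-2)*r^4*y + (-2)*r^5 + (1)*r^6*y^2 + (-2)*r^6*x^2
    + (-3)*r^6*s^2*x^2 + (-3)*r^6*c^2*x^2 + (4)*r^7*y + (-18)*r^7*c*s*x + (9)*r^8*c^2
    + (-2)*r^9*y^2 + (-6)*r^10*c*s*x + (-18)*r^10*c^2*y + (-9)*r^11*c^2
    + (-9)*r^11*c^2*s^2 + (-27)*r^11*c^4) * hcs

theorem bridge (r c s x y : ℝ) (hr : r ≠ 0) (hcs : c^2 + s^2 = 1) :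
    ((-2*r^5+r^2-3*(r*c)^2)/r^5) * ((r*s)/r^3 + (c*x-s*y))^2
      + 2*((-3*(r*c)*(r*s))/r^5) * ((r*s)/r^3 + (c*x-s*y)) * ((3*(r*c) - (r*c)/r^3) + (s*x+c*y))
      + (r^5+r^2-3*(r*s)^2)/r^5 * ((3*(r*c) - (r*c)/r^3) + (s*x+c*y))^2
    = ((((r*s)^2-2*(r*c)^2)*r-2)/r^3) * (3*(r*c)*(r*s)/r + x)^2
      + 2*(3*(r*c)*(r*s)/r^2) * (3*(r*c)*(r*s)/r + x) * ((3*(r*c)^2*r-1)/r^2 + y)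
      + ((1-2*r^3+3*r*(r*c)^2)/r^3) * ((3*(r*c)^2*r-1)/r^2 + y)^2 := by
  have hL : ((-2*r^5+r^2-3*(r*c)^2)/r^5) * ((r*s)/r^3 + (c*x-s*y))^2
      + 2*((-3*(r*c)*(r*s))/r^5) * ((r*s)/r^3 + (c*x-s*y)) * ((3*(r*c) - (r*c)/r^3) + (s*x+c*y))
      + (r^5+r^2-3*(r*s)^2)/r^5 * ((3*(r*c) - (r*c)/r^3) + (s*x+c*y))^2
      = ((-2*r^5+r^2-3*(r*c)^2)*(s + r^2*(c*x-s*y))^2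
        + 2*(-3*(r*c)*(r*s))*(s + r^2*(c*x-s*y))*((3*r^3*c - c) + r^2*(s*x+c*y))
        + (r^5+r^2-3*(r*s)^2)*((3*r^3*c - c) + r^2*(s*x+c*y))^2) / r^9 := by
    field_simp
  have hR : ((((r*s)^2-2*(r*c)^2)*r-2)/r^3) * (3*(r*c)*(r*s)/r + x)^2
      + 2*(3*(r*c)*(r*s)/r^2) * (3*(r*c)*(r*s)/r + x) * ((3*(r*c)^2*r-1)/r^2 + y)
      + ((1-2*r^3+3*r*(r*c)^2)/r^3) * ((3*(r*c)^2*r-1)/r^2 + y)^2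
      = ((((r*s)^2-2*(r*c)^2)*r-2)*(3*(r*c)*(r*s)+r*x)^2*r^4
        + 2*(3*(r*c)*(r*s))*(3*(r*c)*(r*s)+r*x)*((3*(r*c)^2*r-1)+r^2*y)*r^4
        + (1-2*r^3+3*r*(r*c)^2)*((3*(r*c)^2*r-1)+r^2*y)^2*r^2) / r^9 := by
    field_simp
  rw [hL, hR, bridge_poly r c s x y hcs]

set_option maxHeartbeats 2000000 in
/-- For `q ∈ 𝔯⁺` with `|q| ≥ 0.54` and polar angle `θ ∈ [0, π/2]`, the minimum of
`F_q` over the closed disk `{s : |s| ≤ ρ(q)}` equals the minimum of `f_q(α)` over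
`α ∈ [0, π/2]`: that minimum is attained at a boundary point
`ρ(q)·(cos(θ+a), sin(θ+a))` with `a ∈ [0, π/2]`. -/
theorem min_on_disk_eq_min_on_arc (q : ℝ × ℝ) (hq : q ∈ HillRegionPlus)
    (hr : 0.54 ≤ nrm q) (θ : ℝ) (hθ : θ ∈ Set.Icc (0:ℝ) (Real.pi / 2))
    (hq1 : q.1 = nrm q * Real.cos θ) (hq2 : q.2 = nrm q * Real.sin θ) :
    ∃ a ∈ Set.Icc (0:ℝ) (Real.pi / 2),
      (∀ α ∈ Set.Icc (0:ℝ) (Real.pi / 2), fq q θ a ≤ fq q θ α) ∧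
      (∀ s : ℝ × ℝ, s.1 ^ 2 + s.2 ^ 2 ≤ ρ q ^ 2 → fq q θ a ≤ Fq q s) := by
  obtain ⟨hreg, hq1pos, hq2pos⟩ := hq
  obtain ⟨hHill, hq1abs, _⟩ := hreg
  set r := nrm q with hrdef
  have hr0 : (0:ℝ) < r := lt_of_lt_of_le (by norm_num) hr
  set c := Real.cos θ with hcdef
  set sθ := Real.sin θ with hsdef
  have hcs : c^2 + sθ^2 = 1 := by rw [hcdef, hsdef]; exact Real.cos_sq_add_sin_sq θ
  have hπ := Real.pi_pos
  have hc0 : 0 ≤ c := Real.cos_nonneg_of_mem_Icc ⟨by linarith [hθ.1], hθ.2⟩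
  have hs0 : 0 ≤ sθ := Real.sin_nonneg_of_nonneg_of_le_pi hθ.1 (by linarith [hθ.2])
  -- β facts
  set β : ℝ := (3:ℝ)^(-(1:ℝ)/3) with hβdef
  have hβpow : β^(3:ℕ) = (3:ℝ)⁻¹ := by
    rw [hβdef, ← Real.rpow_natCast ((3:ℝ)^(-(1:ℝ)/3)) 3, ← Real.rpow_mul (by norm_num : (0:ℝ) ≤ 3)]
    norm_num
  have hβcube : 3*β^3 = 1 := by rw [hβpow]; norm_num
  have h34β : β * (3:ℝ)^((4:ℝ)/3) = 3 := by
    rw [hβdef, ← Real.rpow_add (by norm_num : (0:ℝ) < 3)]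
    norm_num
  -- norm, radius facts
  have hr2q : r^2 = q.1^2 + q.2^2 := Real.sq_sqrt (by positivity)
  have hrad : 0 < 3*q.1^2 + 2/r - (3:ℝ)^((4:ℝ)/3) := by
    have h2r : 2/r = 2*(1/r) := by ring
    rw [h2r]; linarith
  have hρpos : 0 < ρ q := Real.sqrt_pos.2 hrad
  have hρ0 : 0 ≤ ρ q := hρpos.le
  have hρsq : (ρ q)^2 = 3*q.1^2 + 2/r - (3:ℝ)^((4:ℝ)/3) := Real.sq_sqrt hrad.le
  have hH : β*r*(ρ q)^2 = 3*β*q.1^2*r + 2*β - 3*r := by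
    rw [hρsq]
    have : β*r*(3*q.1^2 + 2/r - (3:ℝ)^((4:ℝ)/3))
        = 3*β*q.1^2*r + 2*β*(r*(1/r)) - (β*(3:ℝ)^((4:ℝ)/3))*r := by ring
    rw [this, h34β, mul_one_div_cancel hr0.ne']
    ring
  -- apply the numeric core with u = r*c, v = r*sθ
  have hq1β : r*c ≤ β := by
    rw [← hq1]
    exact (le_of_lt ((abs_lt.1 hq1abs).2))
  have hr2' : r^2 = (r*c)^2 + (r*sθ)^2 := by linear_combination (-(r^2))*hcs
  have hH' : β*r*(ρ q)^2 = 3*β*(r*c)^2*r + 2*β - 3*r := by rw [← hq1]; exact hH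
  obtain ⟨C1, C2, C3, C7⟩ := core_numeric β (r*c) (r*sθ) r (ρ q) hβcube
    (mul_nonneg hr0.le hc0) (mul_nonneg hr0.le hs0) hq1β hr hr2' hρ0 hH'
  -- the rotated quadratic data
  set A11 : ℝ := (((r*sθ)^2-2*(r*c)^2)*r-2)/r^3 with hA11
  set A12 : ℝ := 3*(r*c)*(r*sθ)/r^2 with hA12
  set A22 : ℝ := (1-2*r^3+3*r*(r*c)^2)/r^3 with hA22
  set W1 : ℝ := 3*(r*c)*(r*sθ)/r with hW1
  set W2 : ℝ := (3*(r*c)^2*r-1)/r^2 with hW2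
  have hFrot : ∀ x y : ℝ, Fq q (c*x-sθ*y, sθ*x+c*y)
      = A11*(W1+x)^2 + 2*A12*(W1+x)*(W2+y) + A22*(W2+y)^2 := by
    intro x y
    rw [Fq_expand]
    simp only [hq1, hq2, hA11, hA12, hA22, hW1, hW2]
    exact bridge r c sθ x y hr0.ne' hcs
  -- sign conditions
  have h11 : A11 ≤ 0 := by
    rw [hA11]
    apply div_nonpos_of_nonpos_of_nonneg (by linarith) (by positivity)
  have h12 : 0 ≤ A12 := by
    rw [hA12]
    apply div_nonneg ?_ (by positivity)
    have : 0 ≤ (r*c)*(r*sθ) := mul_nonneg (mul_nonneg hr0.le hc0) (mul_nonneg hr0.le hs0)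
    linarith
  have h22 : 0 ≤ A22 := by
    rw [hA22]
    apply div_nonneg (by linarith) (by positivity)
  have h5 : A11*W1 + A12*(W2 + ρ q) ≤ 0 := by
    have e1 : (((r*sθ)^2-2*(r*c)^2)*r-2)/r^3*(3*(r*c)*(r*sθ)/r)
        + 3*(r*c)*(r*sθ)/r^2*((3*(r*c)^2*r-1)/r^2 + ρ q)
        = ((((r*sθ)^2-2*(r*c)^2)*r-2)*(3*(r*c)*(r*sθ))
          + 3*(r*c)*(r*sθ)*((3*(r*c)^2*r-1)+ρ q*r^2))/r^4 := by
      field_simp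
    have e2 : (((r*sθ)^2-2*(r*c)^2)*r-2)*(3*(r*c)*(r*sθ))
          + 3*(r*c)*(r*sθ)*((3*(r*c)^2*r-1)+ρ q*r^2)
        = 3*(r*c)*(r*sθ)*(r^3 + ρ q*r^2 - 3) := by
      linear_combination (3*r^5*c*sθ)*hcs
    have hid : A11*W1 + A12*(W2 + ρ q) = 3*(r*c)*(r*sθ)*(r^3 + ρ q*r^2 - 3)/r^4 := by
      rw [hA11, hA12, hW1, hW2, e1, e2]
    rw [hid]
    apply div_nonpos_of_nonpos_of_nonneg ?_ (by positivity)
    have h1 : 0 ≤ 3*(r*c)*(r*sθ) := by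
      have : 0 ≤ (r*c)*(r*sθ) := mul_nonneg (mul_nonneg hr0.le hc0) (mul_nonneg hr0.le hs0)
      linarith
    have h2 : r^3 + ρ q*r^2 - 3 ≤ 0 := by linarith
    exact mul_nonpos_iff.2 (Or.inl ⟨h1, h2⟩)
  have h7 : A12*(W1 + ρ q) + A22*(W2 + ρ q) ≤ 0 := by
    have hid : A12*(W1 + ρ q) + A22*(W2 + ρ q)
        = (9*(r*c)^2*(r*sθ)^2*r^2 + 3*(r*c)*(r*sθ)*r^3*(ρ q)
          + (1-2*r^3+3*r*(r*c)^2)*(3*r*(r*c)^2-1+(ρ q)*r^2))/r^5 := by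
      rw [hA12, hA22, hW1, hW2]
      field_simp
      ring
    rw [hid]
    apply div_nonpos_of_nonpos_of_nonneg ?_ (by positivity)
    linarith [C7]
  -- fq in rotated coordinates
  have hfq_form : ∀ α : ℝ, fq q θ α
      = A11*(W1 + ρ q*Real.cos α)^2 + 2*A12*(W1 + ρ q*Real.cos α)*(W2 + ρ q*Real.sin α)
        + A22*(W2 + ρ q*Real.sin α)^2 := by
    intro α
    rw [fq_eq_Fq]
    have hpair : (ρ q * Real.cos (θ + α), ρ q * Real.sin (θ + α))
        = (c*(ρ q*Real.cos α) - sθ*(ρ q*Real.sin α), sθ*(ρ q*Real.cos α) + c*(ρ q*Real.sin α)) := by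
      rw [Real.cos_add, Real.sin_add]
      simp only [Prod.mk.injEq]
      constructor <;> ring
    rw [hpair]
    exact hFrot (ρ q*Real.cos α) (ρ q*Real.sin α)
  -- minimizer of fq on the segment
  have hcont : ContinuousOn (fq q θ) (Set.Icc (0:ℝ) (Real.pi/2)) := by
    have heq : fq q θ = fun α => A11*(W1 + ρ q*Real.cos α)^2
        + 2*A12*(W1 + ρ q*Real.cos α)*(W2 + ρ q*Real.sin α) + A22*(W2 + ρ q*Real.sin α)^2 :=
      funext hfq_form
    rw [heq]
    fun_prop
  obtain ⟨a, haI, hamin⟩ := isCompact_Icc.exists_isMinOn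
    ⟨0, Set.left_mem_Icc.2 (by linarith)⟩ hcont
  refine ⟨a, haI, fun α hα => hamin hα, ?_⟩
  intro z hz
  -- rotate z into the frame
  have hzrot : z = (c*(c*z.1+sθ*z.2) - sθ*(-sθ*z.1+c*z.2), sθ*(c*z.1+sθ*z.2) + c*(-sθ*z.1+c*z.2)) := by
    have h1 : c*(c*z.1+sθ*z.2) - sθ*(-sθ*z.1+c*z.2) = z.1 := by linear_combination z.1*hcs
    have h2 : sθ*(c*z.1+sθ*z.2) + c*(-sθ*z.1+c*z.2) = z.2 := by linear_combination z.2*hcs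
    rw [h1, h2]
  have hFz : Fq q z = A11*(W1+(c*z.1+sθ*z.2))^2 + 2*A12*(W1+(c*z.1+sθ*z.2))*(W2+(-sθ*z.1+c*z.2))
      + A22*(W2+(-sθ*z.1+c*z.2))^2 := by
    conv_lhs => rw [hzrot]
    exact hFrot (c*z.1+sθ*z.2) (-sθ*z.1+c*z.2)
  have hxy : (c*z.1+sθ*z.2)^2 + (-sθ*z.1+c*z.2)^2 ≤ (ρ q)^2 := by
    have : (c*z.1+sθ*z.2)^2 + (-sθ*z.1+c*z.2)^2 = z.1^2 + z.2^2 := by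
      linear_combination (z.1^2+z.2^2)*hcs
    rw [this]; exact hz
  obtain ⟨X, Y, hX0, hY0, hcirc, hle⟩ := quarter_reduce A11 A12 A22 W1 W2 (ρ q)
    hρ0 h11 h12 h22 h5 h7 (c*z.1+sθ*z.2) (-sθ*z.1+c*z.2) hxy
  -- turn the boundary point into an angle
  have hXρ : X ≤ ρ q := sqrt_step hρ0 (by linarith [sq_nonneg Y, hcirc]) hX0
  have hXdiv : X / ρ q ≤ 1 := (div_le_one hρpos).2 hXρ
  have hXdiv0 : 0 ≤ X / ρ q := div_nonneg hX0 hρ0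
  set a' := Real.arccos (X / ρ q) with ha'def
  have ha'I : a' ∈ Set.Icc (0:ℝ) (Real.pi/2) :=
    ⟨Real.arccos_nonneg _, Real.arccos_le_pi_div_two.2 hXdiv0⟩
  have hcosa' : Real.cos a' = X / ρ q := Real.cos_arccos (by linarith) hXdiv
  have hsina' : Real.sin a' = Y / ρ q := by
    rw [ha'def, Real.sin_arccos]
    have h1 : 1 - (X/ρ q)^2 = (Y/ρ q)^2 := by
      field_simp
      linarith [hcirc]
    rw [h1, Real.sqrt_sq (div_nonneg hY0 hρ0)]
  have hXv : ρ q * Real.cos a' = X := by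
    rw [hcosa']; field_simp
  have hYv : ρ q * Real.sin a' = Y := by
    rw [hsina']; field_simp
  have hfqa' : fq q θ a' = A11*(W1+X)^2 + 2*A12*(W1+X)*(W2+Y) + A22*(W2+Y)^2 := by
    rw [hfq_form a', hXv, hYv]
  calc fq q θ a ≤ fq q θ a' := hamin ha'I
    _ = A11*(W1+X)^2 + 2*A12*(W1+X)*(W2+Y) + A22*(W2+Y)^2 := hfqa'
    _ ≤ _ := hle
    _ = Fq q z := hFz.symm

end
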